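/- Let P be a set of 2n points in regular wheel configuration, n ≥ 2. If T is a plane spanning tree on P having k radial edges with k < n, then T has at least two boundary edges. -/
import Mathlib

open scoped Real

namespace WheelCfg

/-- Vertex type of the wheel on `2n` points: `none` is the center,
`some i` is the `i`-th of the `2n-1` regularly spaced circle points. -/
abbrev WV (n : ℕ) := Option (Fin (2*n-1))

/-- Positions of the points of a regular wheel configuration with center `c`,
radius `R` and initial angle `θ`. -/
noncomputable def wpos (n : ℕ) (c : ℝ × ℝ) (R θ : ℝ) : WV n → ℝ × ℝ
  | none => c
  | some i => (c.1 + R * Real.cos (θ + 2*π*i.val/(2*n-1)),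
               c.2 + R * Real.sin (θ + 2*π*i.val/(2*n-1)))

/-- A radial edge: one endpoint is the center. -/
def Radial {n : ℕ} : WV n → WV n → Prop
  | none, _ => True
  | _, none => True
  | some _, some _ => False

/-- A boundary edge: joins two cyclically consecutive circle points. -/
def Boundary {n : ℕ} : WV n → WV n → Prop
  | some i, some j => (i.val + 1) % (2*n-1) = j.val ∨ (j.val + 1) % (2*n-1) = i.val
  | _, _ => False

/-- Non-crossing: distinct edges have disjoint open segments. -/
def NonCrossing {n : ℕ} (pos : WV n → ℝ × ℝ) (T : SimpleGraph (WV n)) : Prop :=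
  ∀ a b c d : WV n, T.Adj a b → T.Adj c d → s(a,b) ≠ s(c,d) →
    Disjoint (openSegment ℝ (pos a) (pos b)) (openSegment ℝ (pos c) (pos d))

/-- A plane spanning tree of the wheel configuration. -/
def PlaneSpanningTree {n : ℕ} (pos : WV n → ℝ × ℝ) (T : SimpleGraph (WV n)) : Prop :=
  T.IsTree ∧ NonCrossing pos T

/-- A partition of the edge set of the complete geometric graph into `n` graphs. -/
def IsPartition {n : ℕ} (T : Fin n → SimpleGraph (WV n)) : Prop :=
  ∀ a b : WV n, a ≠ b → ∃! i : Fin n, (T i).Adj a b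

/-- The cyclic successor of a circle point. -/
def nxt {m : ℕ} (k : Fin m) : Fin m := ⟨(k.val + 1) % m, Nat.mod_lt _ k.pos⟩

/-- The number of boundary edges of `T`. -/
noncomputable def boundaryCount {n : ℕ} (T : SimpleGraph (WV n)) : ℕ :=
  Set.ncard {k : Fin (2*n-1) | T.Adj (some k) (some (nxt k))}

/-- The number of radial edges of `T`. -/
noncomputable def radialCount {n : ℕ} (T : SimpleGraph (WV n)) : ℕ :=
  Set.ncard {k : Fin (2*n-1) | T.Adj none (some k)}

/-- The circle point with index `k` (mod `2n-1`). -/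
def cir (n : ℕ) (h : 0 < 2*n-1) (k : ℕ) : WV n := some ⟨k % (2*n-1), Nat.mod_lt _ h⟩

/-- Signed side of point `p` with respect to the oriented line through `u`, `v`. -/
def sideVal (u v p : ℝ × ℝ) : ℝ :=
  (v.1 - u.1) * (p.2 - u.2) - (v.2 - u.2) * (p.1 - u.1)

end WheelCfg

namespace WheelCfg

noncomputable def pt (c : ℝ × ℝ) (R θ : ℝ) (m : ℕ) (t : ℝ) : ℝ × ℝ :=
  (c.1 + R * Real.cos (θ + 2*π*t/m), c.2 + R * Real.sin (θ + 2*π*t/m))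

lemma cross_lemma (u v p q : ℝ × ℝ)
    (h1 : sideVal u v p * sideVal u v q < 0)
    (h2 : sideVal p q u * sideVal p q v < 0) :
    ¬ Disjoint (openSegment ℝ u v) (openSegment ℝ p q) := by
  rw [Set.not_disjoint_iff]
  set a := sideVal p q u with ha
  set b := sideVal p q v with hb
  set s := sideVal u v p with hs
  set t := sideVal u v q with ht
  have hab : a - b ≠ 0 := by
    rcases mul_neg_iff.1 h2 with ⟨h,h'⟩|⟨h,h'⟩ <;> nlinarith
  have hst : s - t ≠ 0 := by
    rcases mul_neg_iff.1 h1 with ⟨h,h'⟩|⟨h,h'⟩ <;> nlinarith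
  have hlam : 0 < a / (a-b) ∧ a / (a-b) < 1 := by
    rcases mul_neg_iff.1 h2 with ⟨h,h'⟩|⟨h,h'⟩
    · exact ⟨div_pos h (by linarith), by rw [div_lt_one (by linarith)]; linarith⟩
    · refine ⟨div_pos_of_neg_of_neg h (by linarith), ?_⟩
      rw [div_lt_one_of_neg (by linarith)]; linarith
  have hmu : 0 < s / (s-t) ∧ s / (s-t) < 1 := by
    rcases mul_neg_iff.1 h1 with ⟨h,h'⟩|⟨h,h'⟩
    · exact ⟨div_pos h (by linarith), by rw [div_lt_one (by linarith)]; linarith⟩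
    · refine ⟨div_pos_of_neg_of_neg h (by linarith), ?_⟩
      rw [div_lt_one_of_neg (by linarith)]; linarith
  refine ⟨(1 - a/(a-b)) • u + (a/(a-b)) • v, ?_, ?_⟩
  · rw [openSegment_eq_image]
    exact ⟨a/(a-b), ⟨hlam.1, hlam.2⟩, rfl⟩
  · rw [openSegment_eq_image]
    refine ⟨s/(s-t), ⟨hmu.1, hmu.2⟩, ?_⟩
    have key : (1 - s/(s-t)) • p + (s/(s-t)) • q = (1 - a/(a-b)) • u + (a/(a-b)) • v := by
      have h1 : ((1 - s/(s-t)) • p + (s/(s-t)) • q).1 = ((1 - a/(a-b)) • u + (a/(a-b)) • v).1 := by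
        simp only [Prod.smul_fst, Prod.fst_add, smul_eq_mul]
        field_simp
        simp only [ha, hb, hs, ht, sideVal]
        ring
      have h2 : ((1 - s/(s-t)) • p + (s/(s-t)) • q).2 = ((1 - a/(a-b)) • u + (a/(a-b)) • v).2 := by
        simp only [Prod.smul_snd, Prod.snd_add, smul_eq_mul]
        field_simp
        simp only [ha, hb, hs, ht, sideVal]
        ring
      exact Prod.ext h1 h2
    exact key


lemma sin_prod_identity (x y : ℝ) :
    Real.sin (2*x) + Real.sin (2*y) - Real.sin (2*x + 2*y)
    = 4 * Real.sin x * Real.sin y * Real.sin (x + y) := by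
  rw [show (2:ℝ)*x = x + x by ring, show (2:ℝ)*y = y + y by ring,
    show x + x + (y + y) = (x+y) + (x+y) by ring]
  simp only [Real.sin_add, Real.cos_add]
  linear_combination (-2*Real.sin x*Real.cos x) * (Real.sin_sq_add_cos_sq y)
    + (-2*Real.sin y*Real.cos y) * (Real.sin_sq_add_cos_sq x)

lemma sideVal_circle (c : ℝ × ℝ) (R : ℝ) (A B C : ℝ) :
    sideVal (c.1 + R * Real.cos A, c.2 + R * Real.sin A)
            (c.1 + R * Real.cos B, c.2 + R * Real.sin B)
            (c.1 + R * Real.cos C, c.2 + R * Real.sin C)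
    = R^2 * (Real.sin (C-B) + Real.sin (B-A) - Real.sin (C-A)) := by
  simp only [sideVal, Real.sin_sub]
  ring

lemma side3 (c : ℝ × ℝ) (R θ : ℝ) (m : ℕ) (hm : 0 < m) (t1 t2 t3 : ℝ) :
    sideVal (pt c R θ m t1) (pt c R θ m t2) (pt c R θ m t3)
    = 4 * R^2 * Real.sin (π*(t2-t1)/m) * Real.sin (π*(t3-t2)/m) * Real.sin (π*(t3-t1)/m) := by
  have hm' : (m:ℝ) ≠ 0 := Nat.cast_ne_zero.2 hm.ne'
  set x := π*(t2-t1)/m with hx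
  set y := π*(t3-t2)/m with hy
  have hCB : (θ + 2*π*t3/m) - (θ + 2*π*t2/m) = 2*y := by rw [hy]; field_simp; ring
  have hBA : (θ + 2*π*t2/m) - (θ + 2*π*t1/m) = 2*x := by rw [hx]; field_simp; ring
  have hCA : (θ + 2*π*t3/m) - (θ + 2*π*t1/m) = 2*x + 2*y := by rw [hx, hy]; field_simp; ring
  have hxy : π*(t3-t1)/m = x + y := by rw [hx, hy]; field_simp; ring
  rw [show pt c R θ m t1 = (c.1 + R * Real.cos (θ + 2*π*t1/m), c.2 + R * Real.sin (θ + 2*π*t1/m)) from rfl,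
     show pt c R θ m t2 = (c.1 + R * Real.cos (θ + 2*π*t2/m), c.2 + R * Real.sin (θ + 2*π*t2/m)) from rfl,
     show pt c R θ m t3 = (c.1 + R * Real.cos (θ + 2*π*t3/m), c.2 + R * Real.sin (θ + 2*π*t3/m)) from rfl,
     sideVal_circle, hCB, hBA, hCA, hxy]
  linear_combination R^2 * sin_prod_identity x y

lemma side_center (c : ℝ × ℝ) (R θ : ℝ) (m : ℕ) (hm : 0 < m) (t1 t2 : ℝ) :
    sideVal c (pt c R θ m t1) (pt c R θ m t2)
    = R^2 * Real.sin (2*π*(t2-t1)/m) := by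
  have hm' : (m:ℝ) ≠ 0 := Nat.cast_ne_zero.2 hm.ne'
  have h : 2*π*(t2-t1)/m = (θ + 2*π*t2/m) - (θ + 2*π*t1/m) := by field_simp; ring
  simp only [sideVal, pt, h, Real.sin_sub]
  ring

lemma pt_periodic (c : ℝ × ℝ) (R θ : ℝ) (m : ℕ) (hm : 0 < m) (t : ℝ) :
    pt c R θ m (t + m) = pt c R θ m t := by
  have hm' : (m:ℝ) ≠ 0 := Nat.cast_ne_zero.2 hm.ne'
  have h : θ + 2*π*(t + m)/m = (θ + 2*π*t/m) + 2*π := by field_simp; ring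
  simp [pt, h, Real.cos_add_two_pi, Real.sin_add_two_pi]


lemma sideVal_cyc (u v p : ℝ × ℝ) : sideVal u v p = sideVal p u v := by
  simp only [sideVal]; ring

lemma sign_pnp {r x y z : ℝ} (hr : 0 < r) (hx : 0 < x) (hy : y < 0) (hz : 0 < z) :
    4*r^2*x*y*z < 0 := by nlinarith [mul_pos (mul_pos (mul_pos hr hr) hx) hz]

lemma sign_ppp {r x y z : ℝ} (hr : 0 < r) (hx : 0 < x) (hy : 0 < y) (hz : 0 < z) :
    0 < 4*r^2*x*y*z := by nlinarith [mul_pos (mul_pos (mul_pos hx hy) hz) (mul_pos hr hr)]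

lemma sign_pnn {r x y z : ℝ} (hr : 0 < r) (hx : 0 < x) (hy : y < 0) (hz : z < 0) :
    0 < 4*r^2*x*y*z := by nlinarith [mul_pos (mul_pos (mul_pos hx (neg_pos.2 hy)) (neg_pos.2 hz)) (mul_pos hr hr)]

lemma sin_pi_div_pos {m : ℕ} (hm : 0 < m) {s : ℝ} (h0 : 0 < s) (h1 : s < m) :
    0 < Real.sin (π*s/m) := by
  have hm' : (0:ℝ) < m := by exact_mod_cast hm
  apply Real.sin_pos_of_pos_of_lt_pi
  · positivity
  · rw [div_lt_iff₀ hm']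
    nlinarith [Real.pi_pos]

lemma sin_pi_div_neg {m : ℕ} (hm : 0 < m) {s : ℝ} (h0 : -(m:ℝ) < s) (h1 : s < 0) :
    Real.sin (π*s/m) < 0 := by
  have := sin_pi_div_pos hm (s := -s) (by linarith) (by linarith)
  have h : π*s/(m:ℝ) = -(π*(-s)/m) := by ring
  rw [h, Real.sin_neg]; linarith

lemma sin_two_pi_div_pos {m : ℕ} (hm : 0 < m) {s : ℝ} (h0 : 0 < s) (h1 : 2*s < m) :
    0 < Real.sin (2*π*s/m) := by
  have h : 2*π*s/(m:ℝ) = π*(2*s)/m := by ring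
  rw [h]; exact sin_pi_div_pos hm (by linarith) (by linarith)

lemma sin_two_pi_div_neg {m : ℕ} (hm : 0 < m) {s : ℝ} (h0 : -(m:ℝ) < 2*s) (h1 : s < 0) :
    Real.sin (2*π*s/m) < 0 := by
  have h : 2*π*s/(m:ℝ) = π*(2*s)/m := by ring
  rw [h]; exact sin_pi_div_neg hm (by linarith) (by linarith)

/-- L1: interleaved chords cross. -/
lemma chords_cross {m : ℕ} (hm : 0 < m) (c : ℝ × ℝ) {R : ℝ} (θ : ℝ) (hR : 0 < R)
    {t1 t2 t3 t4 : ℝ}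
    (h12 : t1 < t2) (h23 : t2 < t3) (h34 : t3 < t4) (h41 : t4 < t1 + m) :
    ¬ Disjoint (openSegment ℝ (pt c R θ m t1) (pt c R θ m t3))
               (openSegment ℝ (pt c R θ m t2) (pt c R θ m t4)) := by
  have hm' : (0:ℝ) < m := by exact_mod_cast hm
  apply cross_lemma
  · have S1 : sideVal (pt c R θ m t1) (pt c R θ m t3) (pt c R θ m t2) < 0 := by
      rw [side3 c R θ m hm]
      exact sign_pnp hR (sin_pi_div_pos hm (by linarith) (by linarith))
        (sin_pi_div_neg hm (by linarith) (by linarith))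
        (sin_pi_div_pos hm (by linarith) (by linarith))
    have S2 : 0 < sideVal (pt c R θ m t1) (pt c R θ m t3) (pt c R θ m t4) := by
      rw [side3 c R θ m hm]
      exact sign_ppp hR (sin_pi_div_pos hm (by linarith) (by linarith))
        (sin_pi_div_pos hm (by linarith) (by linarith))
        (sin_pi_div_pos hm (by linarith) (by linarith))
    exact mul_neg_of_neg_of_pos S1 S2
  · have S1 : 0 < sideVal (pt c R θ m t2) (pt c R θ m t4) (pt c R θ m t1) := by
      rw [side3 c R θ m hm]
      exact sign_pnn hR (sin_pi_div_pos hm (by linarith) (by linarith))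
        (sin_pi_div_neg hm (by linarith) (by linarith))
        (sin_pi_div_neg hm (by linarith) (by linarith))
    have S2 : sideVal (pt c R θ m t2) (pt c R θ m t4) (pt c R θ m t3) < 0 := by
      rw [side3 c R θ m hm]
      exact sign_pnp hR (sin_pi_div_pos hm (by linarith) (by linarith))
        (sin_pi_div_neg hm (by linarith) (by linarith))
        (sin_pi_div_pos hm (by linarith) (by linarith))
    exact mul_neg_of_pos_of_neg S1 S2
/-- L2 -/
lemma radial_cross {m : ℕ} (hm : 0 < m) (c : ℝ × ℝ) {R : ℝ} (θ : ℝ) (hR : 0 < R)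
    {t1 t2 t3 : ℝ}
    (h12 : t1 < t2) (h23 : t2 < t3) (h31 : 2*t3 < 2*t1 + m) :
    ¬ Disjoint (openSegment ℝ (pt c R θ m t1) (pt c R θ m t3))
               (openSegment ℝ c (pt c R θ m t2)) := by
  have hm' : (0:ℝ) < m := by exact_mod_cast hm
  have hR2 : (0:ℝ) < R^2 := by positivity
  apply cross_lemma
  · have S1 : 0 < sideVal (pt c R θ m t1) (pt c R θ m t3) c := by
      rw [sideVal_cyc, side_center c R θ m hm]
      exact mul_pos hR2 (sin_two_pi_div_pos hm (by linarith) (by linarith))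
    have S2 : sideVal (pt c R θ m t1) (pt c R θ m t3) (pt c R θ m t2) < 0 := by
      rw [side3 c R θ m hm]
      exact sign_pnp hR (sin_pi_div_pos hm (by linarith) (by linarith))
        (sin_pi_div_neg hm (by linarith) (by linarith))
        (sin_pi_div_pos hm (by linarith) (by linarith))
    exact mul_neg_of_pos_of_neg S1 S2
  · have S1 : sideVal c (pt c R θ m t2) (pt c R θ m t1) < 0 := by
      rw [side_center c R θ m hm]
      exact mul_neg_of_pos_of_neg hR2 (sin_two_pi_div_neg hm (by linarith) (by linarith))
    have S2 : 0 < sideVal c (pt c R θ m t2) (pt c R θ m t3) := by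
      rw [side_center c R θ m hm]
      exact mul_pos hR2 (sin_two_pi_div_pos hm (by linarith) (by linarith))
    exact mul_neg_of_neg_of_pos S1 S2

lemma wpos_cir' {n : ℕ} (hn : 2 ≤ n) (hm : 0 < 2*n-1) (c : ℝ × ℝ) (R θ : ℝ) (j : ℕ) :
    wpos n c R θ (cir n hm j) = pt c R θ (2*n-1) (j : ℝ) := by
  have hM : (2*(n:ℝ)-1) = ((2*n-1 : ℕ) : ℝ) := by
    push_cast [Nat.cast_sub (by omega : 1 ≤ 2*n)]; ring
  have hMpos : (0:ℝ) < ((2*n-1:ℕ):ℝ) := by exact_mod_cast hm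
  have hangle : ∀ f : ℝ → ℝ, (∀ x (k:ℤ), f (x + k * (2*π)) = f x) →
      f (θ + 2*π*((j % (2*n-1) : ℕ):ℝ)/((2*n-1:ℕ):ℝ)) = f (θ + 2*π*(j:ℝ)/((2*n-1:ℕ):ℝ)) := by
    intro f hf
    have hj : (j : ℝ) = ((j % (2*n-1) : ℕ) : ℝ) + ((j / (2*n-1) : ℕ) : ℝ) * ((2*n-1:ℕ):ℝ) := by
      rw [← Nat.cast_mul, ← Nat.cast_add, Nat.mod_add_div']
    have hcast : (((j / (2*n-1) : ℕ) : ℤ) : ℝ) = ((j / (2*n-1) : ℕ) : ℝ) := by norm_cast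
    have he : θ + 2*π*(j:ℝ)/((2*n-1:ℕ):ℝ)
        = (θ + 2*π*((j % (2*n-1) : ℕ):ℝ)/((2*n-1:ℕ):ℝ)) + ((j / (2*n-1) : ℕ) : ℤ) * (2*π) := by
      rw [hj, hcast]
      set A := ((j % (2*n-1) : ℕ) : ℝ)
      set B := ((j / (2*n-1) : ℕ) : ℝ)
      set M := ((2*n-1:ℕ):ℝ)
      have hMne : M ≠ 0 := ne_of_gt hMpos
      field_simp
      ring
    rw [he, hf]
  have hc := hangle Real.cos (fun x k => Real.cos_add_int_mul_two_pi x k)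
  have hs := hangle Real.sin (fun x k => Real.sin_add_int_mul_two_pi x k)
  show (c.1 + R * Real.cos (θ + 2*π*((j % (2*n-1) : ℕ):ℝ)/(2*(n:ℝ)-1)),
        c.2 + R * Real.sin (θ + 2*π*((j % (2*n-1) : ℕ):ℝ)/(2*(n:ℝ)-1))) = _
  rw [hM, hc, hs]
  rfl

section Main
variable {n : ℕ} {T : SimpleGraph (WV n)} {c : ℝ × ℝ} {R θ : ℝ}

lemma cir_congr (hm : 0 < 2*n-1) {x y : ℕ} (h : x % (2*n-1) = y % (2*n-1)) :
    cir n hm x = cir n hm y := by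
  simp only [cir, Option.some_inj, Fin.mk.injEq]; exact h

lemma cir_ne_none (hm : 0 < 2*n-1) (x : ℕ) : cir n hm x ≠ none := by simp [cir]

lemma cir_offset_inj (hm : 0 < 2*n-1) {i j a : ℕ} (hi : i < 2*n-1) (hj : j < 2*n-1)
    (he : cir n hm (a+i) = cir n hm (a+j)) : i = j := by
  simp only [cir, Option.some_inj, Fin.mk.injEq] at he
  have h2 : i ≡ j [MOD 2*n-1] := Nat.ModEq.add_left_cancel' a he
  calc i = i % (2*n-1) := (Nat.mod_eq_of_lt hi).symm
  _ = j % (2*n-1) := h2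
  _ = j := Nat.mod_eq_of_lt hj

lemma sym2_ne {x y u v : WV n} (h1 : u ≠ x) (h2 : u ≠ y) : s(x,y) ≠ s(u,v) := by
  intro h
  rw [Sym2.eq_iff] at h
  rcases h with ⟨h,_⟩|⟨_,h⟩ <;> [exact h1 h.symm; exact h2 h.symm]

/-- D2: no radial edge into the open minor arc of a chord of T. -/
lemma no_radial_inside (hn : 2 ≤ n) (hm : 0 < 2*n-1) (hR : 0 < R)
    (hT : PlaneSpanningTree (wpos n c R θ) T) {a d j : ℕ} (hd2 : d ≤ n-1)
    (hadj : T.Adj (cir n hm a) (cir n hm (a+d))) (hj0 : 0 < j) (hjd : j < d) :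
    ¬ T.Adj none (cir n hm (a+j)) := by
  intro hrad
  have hne : s(cir n hm a, cir n hm (a+d)) ≠ s((none : WV n), cir n hm (a+j)) :=
    sym2_ne (cir_ne_none hm a).symm ((cir_ne_none hm (a+d)).symm)
  have hdisj := hT.2 _ _ _ _ hadj hrad hne
  rw [wpos_cir' hn hm, wpos_cir' hn hm, wpos_cir' hn hm,
    show wpos n c R θ (none : WV n) = c from rfl] at hdisj
  refine radial_cross hm c θ hR (t1 := (a:ℝ)) (t2 := ((a+j : ℕ):ℝ)) (t3 := ((a+d:ℕ):ℝ))
    ?_ ?_ ?_ hdisj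
  · exact_mod_cast (by omega : a < a+j)
  · exact_mod_cast (by omega : a+j < a+d)
  · exact_mod_cast (by omega : 2*(a+d) < 2*a + (2*n-1))

/-- D3: neighbours of points strictly inside the minor arc stay in the closed arc. -/
lemma chord_trapped (hn : 2 ≤ n) (hm : 0 < 2*n-1) (hR : 0 < R)
    (hT : PlaneSpanningTree (wpos n c R θ) T) {a d j : ℕ} (hd2 : d ≤ n-1)
    (hadj : T.Adj (cir n hm a) (cir n hm (a+d))) (hj0 : 0 < j) (hjd : j < d)
    {z : Fin (2*n-1)} (hz : T.Adj (cir n hm (a+j)) (some z)) :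
    ∃ e ≤ d, some z = cir n hm (a+e) := by
  have ham : a % (2*n-1) < 2*n-1 := Nat.mod_lt _ hm
  have hzm : z.val < 2*n-1 := z.2
  have hdm := Nat.div_add_mod a (2*n-1)
  obtain ⟨e, hem, h1⟩ : ∃ e, e < 2*n-1 ∧ (a+e) % (2*n-1) = z.val := by
    rcases le_or_gt (a % (2*n-1)) z.val with hc | hc
    · refine ⟨z.val - a % (2*n-1), by omega, ?_⟩
      rw [show a + (z.val - a % (2*n-1)) = (2*n-1) * (a / (2*n-1)) + z.val by omega,
        Nat.mul_add_mod, Nat.mod_eq_of_lt hzm]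
    · refine ⟨z.val + (2*n-1) - a % (2*n-1), by omega, ?_⟩
      rw [show a + (z.val + (2*n-1) - a % (2*n-1)) = (2*n-1) * (a / (2*n-1)) + (z.val + (2*n-1)) by omega,
        Nat.mul_add_mod, Nat.add_mod_right, Nat.mod_eq_of_lt hzm]
  have hze : some z = cir n hm (a+e) := by
    simp only [cir, Option.some_inj, Fin.mk.injEq, h1]
  refine ⟨e, ?_, hze⟩
  by_contra hed
  push_neg at hed
  -- e > d : the chords (a, a+d) and (a+j, a+e) interleave
  rw [hze] at hz
  have hne : s(cir n hm a, cir n hm (a+d)) ≠ s(cir n hm (a+j), cir n hm (a+e)) := by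
    apply sym2_ne
    · intro hcontra
      have := cir_offset_inj hm (i := 0) (j := j) (a := a) (by omega) (by omega)
        (by simpa using hcontra.symm)
      omega
    · intro hcontra
      have := cir_offset_inj hm (i := j) (j := d) (a := a) (by omega) (by omega) hcontra
      omega
  have hdisj := hT.2 _ _ _ _ hadj hz hne
  rw [wpos_cir' hn hm, wpos_cir' hn hm, wpos_cir' hn hm, wpos_cir' hn hm] at hdisj
  refine chords_cross hm c θ hR (t1 := (a:ℝ)) (t2 := ((a+j : ℕ):ℝ)) (t3 := ((a+d:ℕ):ℝ))
    (t4 := ((a+e:ℕ):ℝ)) ?_ ?_ ?_ ?_ hdisj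
  · exact_mod_cast (by omega : a < a+j)
  · exact_mod_cast (by omega : a+j < a+d)
  · exact_mod_cast (by omega : a+d < a+e)
  · exact_mod_cast (by omega : a+e < a + (2*n-1))

/-- every vertex has a neighbour -/
lemma exists_neighbor (hn : 2 ≤ n) (hm : 0 < 2*n-1)
    (hT : PlaneSpanningTree (wpos n c R θ) T) (u : WV n) : ∃ w, T.Adj u w := by
  have hconn := hT.1.isConnected.preconnected
  obtain ⟨v0, hv0⟩ : ∃ v0 : WV n, v0 ≠ u := by
    cases u with
    | none => exact ⟨some ⟨0, hm⟩, by simp⟩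
    | some x => exact ⟨none, by simp⟩
  obtain ⟨p⟩ := hconn u v0
  cases p with
  | nil => exact absurd rfl hv0.symm
  | cons h p => exact ⟨_, h⟩

/-- K: every chord of T has a boundary edge of T inside its closed minor arc. -/
lemma bnd_in_arc (hn : 2 ≤ n) (hm : 0 < 2*n-1) (hR : 0 < R)
    (hT : PlaneSpanningTree (wpos n c R θ) T) :
    ∀ d, 1 ≤ d → d ≤ n-1 → ∀ a, T.Adj (cir n hm a) (cir n hm (a+d)) →
    ∃ j < d, T.Adj (cir n hm (a+j)) (cir n hm (a+j+1)) := by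
  intro d
  induction d using Nat.strong_induction_on with
  | _ d IH =>
    intro hd1 hd2 a hadj
    rcases eq_or_lt_of_le hd1 with rfl | hd
    · exact ⟨0, by omega, by simpa using hadj⟩
    · obtain ⟨w, hw⟩ := exists_neighbor hn hm hT (cir n hm (a+1))
      cases w with
      | none =>
        exact absurd hw.symm (no_radial_inside hn hm hR hT hd2 hadj one_pos (by omega))
      | some z =>
        obtain ⟨e, hed, hze⟩ := chord_trapped hn hm hR hT hd2 hadj one_pos (by omega) hw
        rw [hze] at hw
        have hene : e ≠ 1 := by
          intro h
          rw [h] at hw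
          exact (T.ne_of_adj hw) rfl
        rcases Nat.eq_zero_or_pos e with he0 | hepos
        · rw [he0] at hw
          exact ⟨0, by omega, by simpa using hw.symm⟩
        · -- e ≥ 2
          have he2 : 2 ≤ e := by omega
          have hchord : T.Adj (cir n hm (a+1)) (cir n hm ((a+1)+(e-1))) := by
            rw [show (a+1)+(e-1) = a+e by omega]; exact hw
          obtain ⟨j', hj', hb⟩ := IH (e-1) (by omega) (by omega) (by omega) (a+1) hchord
          refine ⟨1+j', by omega, ?_⟩
          rw [show a+(1+j') = (a+1)+j' by omega]
          rw [show (a+1)+j'+1 = a+1+j'+1 by omega]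
          exact hb

/-- D1: normalization of an arbitrary chord of T. -/
lemma chord_norm (hn : 2 ≤ n) (hm : 0 < 2*n-1) {x y : Fin (2*n-1)}
    (h : T.Adj (some x) (some y)) :
    ∃ b d', 1 ≤ d' ∧ d' ≤ n-1 ∧
      ((some x = cir n hm b ∧ some y = cir n hm (b+d')) ∨
       (some y = cir n hm b ∧ some x = cir n hm (b+d'))) := by
  have hxy : x ≠ y := fun he => (T.ne_of_adj h) (by rw [he])
  have hxv : x.val < 2*n-1 := x.2
  have hyv : y.val < 2*n-1 := y.2
  have hvne : x.val ≠ y.val := fun he => hxy (Fin.ext he)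
  have hx : some x = cir n hm x.val := by
    simp only [cir, Option.some_inj]; exact Fin.ext (Nat.mod_eq_of_lt hxv).symm
  have hy : some y = cir n hm y.val := by
    simp only [cir, Option.some_inj]; exact Fin.ext (Nat.mod_eq_of_lt hyv).symm
  -- δ : cyclic offset from x to y
  obtain ⟨δ, hδ1, hδ2, hδeq⟩ : ∃ δ, 1 ≤ δ ∧ δ ≤ 2*n-2 ∧ (x.val + δ) % (2*n-1) = y.val := by
    rcases lt_or_gt_of_ne hvne with hc | hc
    · exact ⟨y.val - x.val, by omega, by omega, by
        rw [show x.val + (y.val - x.val) = y.val by omega, Nat.mod_eq_of_lt hyv]⟩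
    · exact ⟨y.val + (2*n-1) - x.val, by omega, by omega, by
        rw [show x.val + (y.val + (2*n-1) - x.val) = y.val + (2*n-1) by omega,
          Nat.add_mod_right, Nat.mod_eq_of_lt hyv]⟩
  have hycir : some y = cir n hm (x.val + δ) := by
    simp only [cir, Option.some_inj]; exact Fin.ext hδeq.symm
  rcases le_or_gt δ (n-1) with hsmall | hbig
  · exact ⟨x.val, δ, hδ1, hsmall, Or.inl ⟨hx, hycir⟩⟩
  · refine ⟨y.val, 2*n-1-δ, by omega, by omega, Or.inr ⟨hy, ?_⟩⟩
    -- y.val + (2n-1-δ) ≡ x.val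
    have : (y.val + (2*n-1-δ)) % (2*n-1) = x.val := by
      have hmodeq : (x.val + δ) % (2*n-1) = y.val % (2*n-1) := by
        rw [hδeq, Nat.mod_eq_of_lt hyv]
      have h1 : (x.val + δ + (2*n-1-δ)) % (2*n-1) = (y.val + (2*n-1-δ)) % (2*n-1) :=
        Nat.ModEq.add_right _ hmodeq
      rw [← h1, show x.val + δ + (2*n-1-δ) = x.val + (2*n-1) by omega,
        Nat.add_mod_right, Nat.mod_eq_of_lt hxv]
    simp only [cir, Option.some_inj]; exact Fin.ext this.symm

/-- mod-level offset cancellation -/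
lemma off_cancel (hm : 0 < 2*n-1) {i j a : ℕ} (hi : i < 2*n-1) (hj : j < 2*n-1)
    (h : (a+i) % (2*n-1) = (a+j) % (2*n-1)) : i = j := by
  have h2 : i ≡ j [MOD 2*n-1] := Nat.ModEq.add_left_cancel' a h
  calc i = i % (2*n-1) := (Nat.mod_eq_of_lt hi).symm
  _ = j % (2*n-1) := h2
  _ = j := Nat.mod_eq_of_lt hj

/-- nested-or-crossing: a chord of T whose gap set overlaps that of a maximal chord
is nested inside it. -/
lemma nested_of_overlap (hn : 2 ≤ n) (hm : 0 < 2*n-1) (hR : 0 < R)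
    (hT : PlaneSpanningTree (wpos n c R θ) T) {a D b d' : ℕ}
    (haD : T.Adj (cir n hm a) (cir n hm (a+D))) (hD1 : 1 ≤ D) (hD2 : D ≤ n-1)
    (hb : T.Adj (cir n hm b) (cir n hm (b+d'))) (hd'1 : 1 ≤ d') (hd'2 : d' ≤ n-1)
    (hd'D : d' ≤ D)
    (hover : ∃ i, i < D ∧ ∃ i', i' < d' ∧ (a+i) % (2*n-1) = (b+i') % (2*n-1)) :
    ∃ β, β + d' ≤ D ∧ cir n hm b = cir n hm (a+β) ∧ cir n hm (b+d') = cir n hm (a+β+d') := by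
  have hdm := Nat.div_add_mod a (2*n-1)
  have hbm : b % (2*n-1) < 2*n-1 := Nat.mod_lt _ hm
  have ham : a % (2*n-1) < 2*n-1 := Nat.mod_lt _ hm
  -- the offset β of b with respect to a
  obtain ⟨β, hβm, hβeq⟩ : ∃ β, β < 2*n-1 ∧ (a+β) % (2*n-1) = b % (2*n-1) := by
    rcases le_or_gt (a % (2*n-1)) (b % (2*n-1)) with hc | hc
    · refine ⟨b % (2*n-1) - a % (2*n-1), by omega, ?_⟩
      rw [show a + (b % (2*n-1) - a % (2*n-1)) = (2*n-1) * (a / (2*n-1)) + b % (2*n-1) by omega,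
        Nat.mul_add_mod, Nat.mod_mod_of_dvd _ dvd_rfl]
    · refine ⟨b % (2*n-1) + (2*n-1) - a % (2*n-1), by omega, ?_⟩
      rw [show a + (b % (2*n-1) + (2*n-1) - a % (2*n-1))
          = (2*n-1) * (a / (2*n-1)) + (b % (2*n-1) + (2*n-1)) by omega,
        Nat.mul_add_mod, Nat.add_mod_right, Nat.mod_mod_of_dvd _ dvd_rfl]
  have hcb : cir n hm b = cir n hm (a+β) := cir_congr hm hβeq.symm
  have hcbd : cir n hm (b+d') = cir n hm (a+β+d') := by
    apply cir_congr hm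
    have : b % (2*n-1) = (a+β) % (2*n-1) := hβeq.symm
    exact Nat.ModEq.add_right d' this
  -- translate the overlap to offsets relative to a
  obtain ⟨i, hiD, i', hi'd, heq⟩ := hover
  have heq2 : (a+i) % (2*n-1) = (a+β+i') % (2*n-1) := by
    rw [heq]
    have h1 : b % (2*n-1) = (a+β) % (2*n-1) := hβeq.symm
    exact Nat.ModEq.add_right i' h1
  -- useful bound facts
  have hn1 : 1 ≤ n - 1 := by omega
  rcases le_or_gt β D with hβD | hβD
  · -- left endpoint inside the closed arc
    rcases le_or_gt (β + d') D with hnest | hout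
    · exact ⟨β, hnest, hcb, hcbd⟩
    · exfalso
      rcases (by omega : β = 0 ∨ (1 ≤ β ∧ β + 1 ≤ D) ∨ β = D) with h0 | ⟨hβ1, hβ2⟩ | hβeqD
      · omega  -- β = 0 gives d' > D
      · -- crossing
        rw [hcb, hcbd] at hb
        have hne : s(cir n hm a, cir n hm (a+D)) ≠ s(cir n hm (a+β), cir n hm (a+β+d')) := by
          apply sym2_ne
          · intro hcontra
            have := cir_offset_inj hm (i := β) (j := 0) (a := a) (by omega) (by omega)
              (by simpa using hcontra)
            omega
          · intro hcontra
            have := cir_offset_inj hm (i := β) (j := D) (a := a) (by omega) (by omega) hcontra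
            omega
        have hdisj := hT.2 _ _ _ _ haD hb hne
        rw [wpos_cir' hn hm, wpos_cir' hn hm, wpos_cir' hn hm, wpos_cir' hn hm] at hdisj
        refine chords_cross hm c θ hR (t1 := ((a:ℕ):ℝ)) (t2 := ((a+β : ℕ):ℝ))
          (t3 := ((a+D:ℕ):ℝ)) (t4 := ((a+β+d':ℕ):ℝ)) ?_ ?_ ?_ ?_ hdisj
        · exact_mod_cast (by omega : a < a+β)
        · exact_mod_cast (by omega : a+β < a+D)
        · exact_mod_cast (by omega : a+D < a+β+d')
        · exact_mod_cast (by omega : a+β+d' < a + (2*n-1))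
      · -- β = D : no overlap possible
        subst hβeqD
        rcases lt_or_ge (β + i') (2*n-1) with hw | hw
        · have := off_cancel hm (a := a) (i := i) (j := β + i') (by omega) hw
            (by rw [heq2, Nat.add_assoc])
          omega
        · omega  -- β + i' ≤ D + d' - 1 ≤ 2n-3 < 2n-1
  · -- left endpoint strictly outside
    -- the overlap forces a wrap
    have hwrap : (2*n-1) ≤ β + i' := by
      by_contra hc
      push_neg at hc
      have := off_cancel hm (a := a) (i := i) (j := β + i') (by omega) (by omega)
        (by rw [heq2, Nat.add_assoc])
      omega
    have hw1 : 1 ≤ β + d' - (2*n-1) := by omega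
    set w := β + d' - (2*n-1) with hwdef
    have hwd : w ≤ d' - 1 := by omega
    rcases (by omega : w ≤ D - 1 ∨ w = D ∨ D + 1 ≤ w) with hwD | hwD | hwD
    · -- crossing with the wrapped chord
      exfalso
      rw [hcb, hcbd] at hb
      have hcir0 : cir n hm (a + (2*n-1)) = cir n hm a := cir_congr hm (Nat.add_mod_right a _)
      have haD' : T.Adj (cir n hm (a+D)) (cir n hm (a + (2*n-1))) := by
        rw [hcir0]; exact haD.symm
      have hne : s(cir n hm (a+D), cir n hm (a+(2*n-1))) ≠ s(cir n hm (a+β), cir n hm (a+β+d')) := by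
        apply sym2_ne
        · intro hcontra
          have := cir_offset_inj hm (i := β) (j := D) (a := a) (by omega) (by omega) hcontra
          omega
        · intro hcontra
          rw [hcir0] at hcontra
          have := cir_offset_inj hm (i := β) (j := 0) (a := a) (by omega) (by omega)
            (by simpa using hcontra)
          omega
      have hdisj := hT.2 _ _ _ _ haD' hb hne
      rw [wpos_cir' hn hm, wpos_cir' hn hm, wpos_cir' hn hm, wpos_cir' hn hm] at hdisj
      refine chords_cross hm c θ hR (t1 := ((a+D:ℕ):ℝ)) (t2 := ((a+β : ℕ):ℝ))
        (t3 := ((a+(2*n-1):ℕ):ℝ)) (t4 := ((a+β+d':ℕ):ℝ)) ?_ ?_ ?_ ?_ hdisj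
      · exact_mod_cast (by omega : a+D < a+β)
      · exact_mod_cast (by omega : a+β < a+(2*n-1))
      · exact_mod_cast (by omega : a+(2*n-1) < a+β+d')
      · exact_mod_cast (by omega : a+β+d' < (a+D) + (2*n-1))
    · -- w = D : the chord would contain the maximal arc strictly, span too large
      omega
    · omega

end Main

end WheelCfg

open WheelCfg in
/-- A plane spanning tree of a regular wheel configuration with fewer than `n` radial edges
has at least two boundary edges. -/
theorem stmt4 (n : ℕ) (hn : 2 ≤ n) (c : ℝ × ℝ) (R θ : ℝ) (hR : 0 < R)
    (T : SimpleGraph (WV n)) (hT : PlaneSpanningTree (wpos n c R θ) T)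
    (hk : radialCount T < n) :
    2 ≤ boundaryCount T := by
  classical
  have hm : 0 < 2*n-1 := by omega
  -- a chord exists
  have hex : ∃ x y : Fin (2*n-1), T.Adj (some x) (some y) := by
    by_contra hno
    push_neg at hno
    have hall : ∀ k : Fin (2*n-1), T.Adj none (some k) := by
      intro k
      obtain ⟨w, hw⟩ := exists_neighbor hn hm hT (some k)
      cases w with
      | none => exact hw.symm
      | some z => exact absurd hw (hno k z)
    have huniv : {k : Fin (2*n-1) | T.Adj none (some k)} = Set.univ :=
      Set.eq_univ_of_forall hall
    rw [radialCount, huniv, Set.ncard_univ, Nat.card_eq_fintype_card, Fintype.card_fin] at hk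
    omega
  obtain ⟨x, y, hxy⟩ := hex
  obtain ⟨b0, d0, hd01, hd02, hor0⟩ := chord_norm hn hm hxy
  have hb0 : T.Adj (cir n hm b0) (cir n hm (b0+d0)) := by
    rcases hor0 with ⟨h1, h2⟩ | ⟨h1, h2⟩
    · rw [← h1, ← h2]; exact hxy
    · rw [← h1, ← h2]; exact hxy.symm
  -- the finset of spans of chords of T
  let F : Finset ℕ := (Finset.range n).filter
    (fun d => 1 ≤ d ∧ d ≤ n-1 ∧ ∃ bb, bb < 2*n-1 ∧ T.Adj (cir n hm bb) (cir n hm (bb+d)))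
  have hmemF : ∀ {bb d : ℕ}, 1 ≤ d → d ≤ n-1 →
      T.Adj (cir n hm bb) (cir n hm (bb+d)) → d ∈ F := by
    intro bb d h1 h2 h3
    refine Finset.mem_filter.2 ⟨Finset.mem_range.2 (by omega), h1, h2,
      bb % (2*n-1), Nat.mod_lt _ hm, ?_⟩
    have e1 : cir n hm (bb % (2*n-1)) = cir n hm bb :=
      cir_congr hm (Nat.mod_mod_of_dvd _ dvd_rfl)
    have e2 : cir n hm (bb % (2*n-1) + d) = cir n hm (bb+d) := by
      apply cir_congr hm
      exact Nat.ModEq.add_right d (Nat.mod_mod_of_dvd _ dvd_rfl)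
    rw [e1, e2]; exact h3
  have hFne : F.Nonempty := ⟨d0, hmemF hd01 hd02 hb0⟩
  set D := F.max' hFne with hDdef
  have hDF := F.max'_mem hFne
  obtain ⟨hD1, hD2, a, haml, haD⟩ := (Finset.mem_filter.1 hDF).2
  have hmax : ∀ {bb d : ℕ}, 1 ≤ d → d ≤ n-1 →
      T.Adj (cir n hm bb) (cir n hm (bb+d)) → d ≤ D :=
    fun h1 h2 h3 => F.le_max' _ (hmemF h1 h2 h3)
  by_cases P : ∃ b d', 1 ≤ d' ∧ d' ≤ n-1 ∧ T.Adj (cir n hm b) (cir n hm (b+d')) ∧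
      ∀ i, i < D → ∀ i', i' < d' → (a+i) % (2*n-1) ≠ (b+i') % (2*n-1)
  · -- two gap-disjoint chords give two distinct boundary edges
    obtain ⟨b, d', h1, h2, h3, hgdisj⟩ := P
    obtain ⟨j, hj, hbd1⟩ := bnd_in_arc hn hm hR hT D hD1 hD2 a haD
    obtain ⟨j', hj', hbd2⟩ := bnd_in_arc hn hm hR hT d' h1 h2 b h3
    set k1 : Fin (2*n-1) := ⟨(a+j) % (2*n-1), Nat.mod_lt _ hm⟩ with hk1def
    set k2 : Fin (2*n-1) := ⟨(b+j') % (2*n-1), Nat.mod_lt _ hm⟩ with hk2def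
    have hnxt : ∀ t : ℕ, (some (nxt (⟨t % (2*n-1), Nat.mod_lt _ hm⟩ : Fin (2*n-1))) : WV n)
        = cir n hm (t+1) := by
      intro t
      simp only [nxt, cir, Option.some_inj, Fin.mk.injEq]
      conv_rhs => rw [Nat.add_mod t 1, Nat.mod_eq_of_lt (show 1 < 2*n-1 by omega)]
    have hk1 : k1 ∈ {k : Fin (2*n-1) | T.Adj (some k) (some (nxt k))} := by
      show T.Adj (some k1) (some (nxt k1))
      rw [hk1def, hnxt (a+j)]
      exact hbd1
    have hk2 : k2 ∈ {k : Fin (2*n-1) | T.Adj (some k) (some (nxt k))} := by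
      show T.Adj (some k2) (some (nxt k2))
      rw [hk2def, hnxt (b+j')]
      exact hbd2
    have hne : k1 ≠ k2 := by
      intro h
      exact hgdisj j hj j' hj' (congrArg Fin.val h)
    rw [boundaryCount]
    have h2' := (Set.one_lt_ncard_iff (Set.toFinite _)).2 ⟨k1, k2, hk1, hk2, hne⟩
    omega
  · -- all chords nested under the maximal chord: contradiction with connectivity
    exfalso
    push_neg at P
    have hnest : ∀ {b d' : ℕ}, 1 ≤ d' → d' ≤ n-1 → T.Adj (cir n hm b) (cir n hm (b+d')) →
        ∃ β, β + d' ≤ D ∧ cir n hm b = cir n hm (a+β) ∧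
          cir n hm (b+d') = cir n hm (a+β+d') := by
      intro b d' h1 h2 h3
      obtain ⟨i, hi, i', hi', heq⟩ := P b d' h1 h2 h3
      exact nested_of_overlap hn hm hR hT haD hD1 hD2 h3 h1 h2 (hmax h1 h2 h3)
        ⟨i, hi, i', hi', heq⟩
    -- every vertex strictly outside the closed arc is radial
    have hout : ∀ i, 1 ≤ i → i ≤ 2*n-1-D-1 → T.Adj none (cir n hm (a+D+i)) := by
      intro i hi1 hi2
      obtain ⟨w, hw⟩ := exists_neighbor hn hm hT (cir n hm (a+D+i))
      cases w with
      | none => exact hw.symm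
      | some z =>
        exfalso
        obtain ⟨b, d', h1, h2, hor⟩ := chord_norm hn hm (hw : T.Adj (some _) (some z))
        have hbchord : T.Adj (cir n hm b) (cir n hm (b+d')) := by
          rcases hor with ⟨e1, e2⟩ | ⟨e1, e2⟩
          · rw [← e1, ← e2]; exact hw
          · rw [← e1, ← e2]; exact hw.symm
        obtain ⟨β, hβ, hcb, hcbd⟩ := hnest h1 h2 hbchord
        have hDi : cir n hm (a+D+i) = some (⟨(a+D+i) % (2*n-1), Nat.mod_lt _ hm⟩ : Fin (2*n-1)) := rfl
        rcases hor with ⟨e1, _⟩ | ⟨_, e1⟩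
        · -- cir (a+D+i) = cir b = cir (a+β)
          have : cir n hm (a+D+i) = cir n hm (a+β) := by rw [hDi, e1, hcb]
          have := cir_offset_inj hm (i := D+i) (j := β) (a := a) (by omega) (by omega)
            (by rw [← Nat.add_assoc]; exact this)
          omega
        · have : cir n hm (a+D+i) = cir n hm (a+β+d') := by rw [hDi, e1, hcbd]
          have := cir_offset_inj hm (i := D+i) (j := β+d') (a := a) (by omega) (by omega)
            (by rw [← Nat.add_assoc, ← Nat.add_assoc]; exact this)
          omega
    -- the radial set contains the (2n-1) - D - 1 outside vertices
    set RS := {k : Fin (2*n-1) | T.Adj none (some k)} with hRSdef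
    let O : Finset (Fin (2*n-1)) := (Finset.range (2*n-1-D-1)).image
      (fun i => (⟨(a+D+1+i) % (2*n-1), Nat.mod_lt _ hm⟩ : Fin (2*n-1)))
    have hOcard : O.card = 2*n-1-D-1 := by
      rw [Finset.card_image_of_injOn, Finset.card_range]
      intro i hi i' hi' hii
      simp only [Finset.coe_range, Set.mem_Iio] at hi hi'
      have := off_cancel hm (i := D+1+i) (j := D+1+i') (a := a) (by omega) (by omega)
        (by
          have := congrArg Fin.val hii
          simpa [← Nat.add_assoc] using this)
      omega
    have hOsub : ↑O ⊆ RS := by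
      intro k hkO
      simp only [O, Finset.coe_image, Finset.coe_range, Set.mem_image, Set.mem_Iio] at hkO
      obtain ⟨i, hi, rfl⟩ := hkO
      show T.Adj none _
      have := hout (1+i) (by omega) (by omega)
      have he : cir n hm (a+D+(1+i)) = some (⟨(a+D+1+i) % (2*n-1), Nat.mod_lt _ hm⟩ : Fin (2*n-1)) := by
        simp only [cir, Option.some_inj, Fin.mk.injEq]
        congr 1
        omega
      rwa [he] at this
    have hRScard : 2*n-1-D-1 ≤ RS.ncard := by
      calc 2*n-1-D-1 = O.card := hOcard.symm
      _ = (↑O : Set (Fin (2*n-1))).ncard := (Set.ncard_coe_finset O).symm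
      _ ≤ RS.ncard := Set.ncard_le_ncard hOsub (Set.toFinite _)
    have hkRS : RS.ncard < n := hk
    have hDn : D = n-1 := by omega
    have hRSO : RS = ↑O := by
      symm
      apply Set.eq_of_subset_of_ncard_le hOsub ?_ (Set.toFinite _)
      rw [Set.ncard_coe_finset, hOcard]
      omega
    -- invariant: the closed arc cannot reach the center
    have hQstep : ∀ u w : WV n, T.Adj u w → (∃ j ≤ D, u = cir n hm (a+j)) →
        (∃ j ≤ D, w = cir n hm (a+j)) := by
      rintro u w hadj ⟨j, hjD, rfl⟩
      cases w with
      | none =>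
        exfalso
        have hmem : (⟨(a+j) % (2*n-1), Nat.mod_lt _ hm⟩ : Fin (2*n-1)) ∈ RS := hadj.symm
        rw [hRSO] at hmem
        simp only [O, Finset.coe_image, Finset.coe_range, Set.mem_image, Set.mem_Iio] at hmem
        obtain ⟨i, hi, he⟩ := hmem
        have := off_cancel hm (i := D+1+i) (j := j) (a := a) (by omega) (by omega)
          (by
            have := congrArg Fin.val he
            simpa [← Nat.add_assoc] using this)
        omega
      | some z =>
        obtain ⟨b, d', h1, h2, hor⟩ := chord_norm hn hm (hadj : T.Adj (some _) (some z))
        have hbchord : T.Adj (cir n hm b) (cir n hm (b+d')) := by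
          rcases hor with ⟨e1, e2⟩ | ⟨e1, e2⟩
          · rw [← e1, ← e2]; exact hadj
          · rw [← e1, ← e2]; exact hadj.symm
        obtain ⟨β, hβ, hcb, hcbd⟩ := hnest h1 h2 hbchord
        rcases hor with ⟨_, e2⟩ | ⟨e2, _⟩
        · exact ⟨β + d', by omega, by rw [e2, hcbd, Nat.add_assoc]⟩
        · exact ⟨β, by omega, by rw [e2, hcb]⟩
    have hQwalk : ∀ (u v : WV n), T.Walk u v → (∃ j ≤ D, u = cir n hm (a+j)) →
        (∃ j ≤ D, v = cir n hm (a+j)) := by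
      intro u v p
      induction p with
      | nil => exact id
      | cons h p ih => exact fun hx => ih (hQstep _ _ h hx)
    obtain ⟨p⟩ := hT.1.isConnected.preconnected (cir n hm a) none
    obtain ⟨j, _, hj⟩ := hQwalk _ _ p ⟨0, Nat.zero_le _, by rw [Nat.add_zero]⟩
    exact (cir_ne_none hm (a+j)) hj.symm
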